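/- Let Ĥ be a symmetric real-valued function on finite sequences of nonnegative reals (with at least one entry, and with positive sum). Then Ĥ satisfies the 2-cocycle equation — Ĥ(a₁,…,a_k, b₁,…,b_l, …, c₁,…,c_m) = Ĥ(a₁+…+a_k, b₁+…+b_l, …, c₁+…+c_m) + Ĥ(a₁,…,a_k) + Ĥ(b₁,…,b_l) + … + Ĥ(c₁,…,c_m) for all such sequences — if and only if there exists a function g : [0,∞) → ℝ such that Ĥ(a₁,…,aₙ) = g(a₁) + … + g(aₙ) − g(a₁+…+aₙ) for all sequences in the domain of Ĥ. Moreover g can be chosen with g(1) = 0. -/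

import Mathlib

open Filter Topology
open scoped NNReal

namespace CocyclePot

/-- A symmetric 2-cocycle on `ℝ≥0` vanishing when an argument is zero. -/
structure Coc where
  f : ℝ≥0 → ℝ≥0 → ℝ
  symm : ∀ x y, f x y = f y x
  cocycle : ∀ x y z, f x (y + z) + f y z = f (x + y) z + f x y
  zero_left : ∀ y, f 0 y = 0

namespace Coc

variable (c : Coc)

lemma zero_right (y : ℝ≥0) : c.f y 0 = 0 := by rw [c.symm]; exact c.zero_left y

end Coc

/-- The twisted monoid `ℝ≥0 × ℝ` with `(x,u)+(y,v) = (x+y, u+v+f x y)`. -/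
@[ext]
structure M (c : Coc) where
  x : ℝ≥0
  u : ℝ

namespace M

variable {c : Coc}

instance : Zero (M c) := ⟨⟨0, 0⟩⟩

noncomputable instance : Add (M c) := ⟨fun a b => ⟨a.x + b.x, a.u + b.u + c.f a.x b.x⟩⟩

lemma add_x (a b : M c) : (a + b).x = a.x + b.x := rfl
lemma add_u (a b : M c) : (a + b).u = a.u + b.u + c.f a.x b.x := rfl
lemma zero_x : (0 : M c).x = 0 := rfl
lemma zero_u : (0 : M c).u = 0 := rfl

noncomputable instance : AddCommMonoid (M c) where
  add := (· + ·)
  zero := 0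
  add_assoc a b d := by
    have h := c.cocycle a.x b.x d.x
    refine M.ext ?_ ?_
    · simp only [add_x]; exact add_assoc _ _ _
    · simp only [add_u, add_x]; linarith
  zero_add a := by
    refine M.ext ?_ ?_
    · simp only [add_x, zero_x]; exact zero_add _
    · simp only [add_u, zero_u, zero_x, c.zero_left]; ring
  add_zero a := by
    refine M.ext ?_ ?_
    · simp only [add_x, zero_x]; exact add_zero _
    · simp only [add_u, zero_u, zero_x, c.zero_right]; ring
  add_comm a b := by
    refine M.ext ?_ ?_
    · simp only [add_x]; exact add_comm _ _
    · simp only [add_u, c.symm a.x b.x]; ring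
  nsmul := nsmulRec
  nsmul_zero := fun _ => rfl
  nsmul_succ := fun _ _ => rfl

lemma add_right_cancel' (a b x : M c) (h : a + x = b + x) : a = b := by
  have h1 : a.x + x.x = b.x + x.x := by rw [← add_x, ← add_x, h]
  have h1' : a.x = b.x := add_right_cancel h1
  have h2 : a.u + x.u + c.f a.x x.x = b.u + x.u + c.f b.x x.x := by
    rw [← add_u, ← add_u, h]
  rw [h1'] at h2
  refine M.ext ?_ ?_
  · exact h1'
  · linarith

/-- cost of `n`-fold addition -/
noncomputable def C (c : Coc) (n : ℕ) (x : ℝ≥0) : ℝ := ∑ k ∈ Finset.range n, c.f x (k • x)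

lemma nsmul_eq (n : ℕ) (a : M c) : n • a = ⟨n • a.x, n • a.u + C c n a.x⟩ := by
  induction n with
  | zero =>
    rw [zero_nsmul]
    refine M.ext ?_ ?_
    · show (0:ℝ≥0) = 0 • a.x; simp
    · show (0:ℝ) = 0 • a.u + C c 0 a.x; simp [C]
  | succ n ih =>
    rw [succ_nsmul, ih]
    refine M.ext ?_ ?_
    · show n • a.x + a.x = (n + 1) • a.x
      rw [succ_nsmul]
    · show n • a.u + C c n a.x + a.u + c.f (n • a.x) a.x = (n + 1) • a.u + C c (n + 1) a.x
      rw [C, C, Finset.sum_range_succ, succ_nsmul, c.symm (n • a.x) a.x]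
      ring

lemma nsmul_cancel {n : ℕ} (hn : n ≠ 0) {a b : M c} (h : n • a = n • b) : a = b := by
  rw [nsmul_eq, nsmul_eq] at h
  have h1 : n • a.x = n • b.x := congrArg M.x h
  have h1' : a.x = b.x := by
    have ha : (n : ℝ≥0) * a.x = (n : ℝ≥0) * b.x := by
      rw [← nsmul_eq_mul, ← nsmul_eq_mul]; exact h1
    exact mul_left_cancel₀ (by exact_mod_cast hn) ha
  have h2 : n • a.u + C c n a.x = n • b.u + C c n b.x := congrArg M.u h
  rw [h1'] at h2
  refine M.ext ?_ ?_
  · exact h1'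
  · have : (n:ℝ) * a.u = (n:ℝ) * b.u := by
      rw [← nsmul_eq_mul, ← nsmul_eq_mul]; linarith
    exact mul_left_cancel₀ (by exact_mod_cast hn) this

/-- partial subtraction -/
noncomputable def msub (a b : M c) : M c :=
  ⟨a.x - b.x, a.u - b.u - c.f (a.x - b.x) b.x⟩

lemma msub_add {a b : M c} (h : b.x ≤ a.x) : msub a b + b = a := by
  refine M.ext ?_ ?_
  · show a.x - b.x + b.x = a.x
    exact tsub_add_cancel_of_le h
  · show a.u - b.u - c.f (a.x - b.x) b.x + b.u + c.f (a.x - b.x) b.x = a.u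
    ring

lemma msub_unique {a b a' b' : M c} (h : b.x ≤ a.x) (h' : b'.x ≤ a'.x)
    (hab : a + b' = a' + b) : msub a b = msub a' b' := by
  apply add_right_cancel' _ _ (b + b')
  calc msub a b + (b + b') = msub a b + b + b' := (add_assoc _ _ _).symm
    _ = a + b' := by rw [msub_add h]
    _ = a' + b := hab
    _ = msub a' b' + b' + b := by rw [msub_add h']
    _ = msub a' b' + (b + b') := by rw [add_assoc, add_comm b' b]

lemma msub_add_msub {a b a' b' : M c} (h : b.x ≤ a.x) (h' : b'.x ≤ a'.x) :
    msub a b + msub a' b' = msub (a + a') (b + b') := by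
  have hbb : (b + b').x ≤ (a + a').x := add_le_add h h'
  apply add_right_cancel' _ _ (b + b')
  rw [msub_add hbb]
  calc msub a b + msub a' b' + (b + b') = (msub a b + b) + (msub a' b' + b') :=
        add_add_add_comm _ _ _ _
    _ = a + a' := by rw [msub_add h, msub_add h']

/-- division by a natural number -/
noncomputable def divN (n : ℕ) (a : M c) : M c :=
  ⟨a.x / n, (a.u - C c n (a.x / n)) / n⟩

lemma nsmul_divN {n : ℕ} (hn : n ≠ 0) (a : M c) : n • divN n a = a := by
  rw [nsmul_eq, divN]
  refine M.ext ?_ ?_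
  · show n • (a.x / n) = a.x
    rw [nsmul_eq_mul, mul_div_cancel₀]
    exact_mod_cast hn
  · show n • ((a.u - C c n (a.x / n)) / n) + C c n (a.x / n) = a.u
    rw [nsmul_eq_mul, mul_div_cancel₀]
    · ring
    · exact_mod_cast hn

/-- lift of `q • β` to `M`, where `β` carries second coordinate `0`. -/
noncomputable def mu (β : ℝ≥0) (q : ℚ≥0) : M c :=
  divN q.den (q.num • (⟨β, 0⟩ : M c))

lemma den_smul_mu (β : ℝ≥0) (q : ℚ≥0) :
    q.den • (mu β q : M c) = q.num • (⟨β, 0⟩ : M c) :=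
  nsmul_divN q.den_ne_zero _

lemma mu_x (β : ℝ≥0) (q : ℚ≥0) : (mu β q : M c).x = (q : ℝ≥0) * β := by
  show (q.num • (⟨β, 0⟩ : M c)).x / (q.den : ℝ≥0) = (q : ℝ≥0) * β
  have h : (q.num • (⟨β, 0⟩ : M c)).x = q.num • β := congrArg M.x (nsmul_eq q.num _)
  rw [h, NNRat.cast_def, nsmul_eq_mul, div_eq_mul_inv, div_eq_mul_inv]
  ring

lemma mu_zero (β : ℝ≥0) : (mu β 0 : M c) = 0 := by
  apply nsmul_cancel ((0 : ℚ≥0).den_ne_zero)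
  rw [den_smul_mu, smul_zero]
  have h0 : (0 : ℚ≥0).num = 0 := rfl
  rw [h0, zero_nsmul]

lemma mu_add (β : ℝ≥0) (q r : ℚ≥0) : (mu β (q + r) : M c) = mu β q + mu β r := by
  set N : ℕ := (q + r).den * (q.den * r.den) with hN
  have hNne : N ≠ 0 := by positivity
  apply nsmul_cancel hNne
  have key : (q.den * r.den) * (q + r).num = (q + r).den * (r.den * q.num + q.den * r.num) := by
    have cast_num : ∀ p : ℚ≥0, (p.num : ℚ≥0) = p * p.den := by
      intro p
      exact (NNRat.mul_den_eq_num p).symm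
    have : ((q.den * r.den) * (q + r).num : ℚ≥0) =
        ((q + r).den * (r.den * q.num + q.den * r.num) : ℚ≥0) := by
      push_cast
      rw [cast_num, cast_num, cast_num]
      push_cast
      ring
    exact_mod_cast this
  calc N • (mu β (q + r) : M c) = (q.den * r.den) • ((q+r).den • (mu β (q+r) : M c)) := by
        rw [← mul_nsmul]
    _ = ((q.den * r.den) * (q + r).num) • ((⟨β, 0⟩ : M c)) := by
        rw [den_smul_mu, ← mul_nsmul, mul_comm]
    _ = ((q + r).den * (r.den * q.num + q.den * r.num)) • ((⟨β, 0⟩ : M c)) := by rw [key]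
    _ = N • (mu β q + mu β r : M c) := by
        rw [smul_add]
        rw [show N • (mu β q : M c) = ((q+r).den * r.den) • (q.den • (mu β q : M c)) by
          rw [← mul_nsmul, hN]; ring_nf]
        rw [show N • (mu β r : M c) = ((q+r).den * q.den) • (r.den • (mu β r : M c)) by
          rw [← mul_nsmul, hN]; ring_nf]
        rw [den_smul_mu, den_smul_mu, ← mul_nsmul, ← mul_nsmul, ← add_nsmul]
        ring_nf

end M

section Construction

open M
open Rat (toNNRat)

variable (c : Coc)

noncomputable def bas : Module.Basis (Module.Basis.ofVectorSpaceIndex ℚ ℝ) ℚ ℝ := Module.Basis.ofVectorSpace ℚ ℝ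

noncomputable def beta (i : Module.Basis.ofVectorSpaceIndex ℚ ℝ) : ℝ≥0 := ⟨|bas i|, abs_nonneg _⟩

noncomputable def eps (i : Module.Basis.ofVectorSpaceIndex ℚ ℝ) (q : ℚ) : ℚ :=
  if 0 < (bas i : ℝ) then q else -q

lemma eps_zero (i) : eps i 0 = 0 := by unfold eps; split <;> simp

lemma eps_add (i) (q r : ℚ) : eps i (q + r) = eps i q + eps i r := by
  unfold eps; split <;> ring

lemma eps_beta (i) (q : ℚ) : ((eps i q : ℚ) : ℝ) * (beta i : ℝ) = (q : ℝ) * bas i := by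
  have hb : (bas i : ℝ) ≠ 0 := bas.ne_zero i
  unfold eps
  rcases lt_or_ge 0 (bas i : ℝ) with h | h
  · rw [if_pos h]
    have : (beta i : ℝ) = bas i := abs_of_pos h
    rw [this]
  · rw [if_neg (not_lt.2 h)]
    have : (beta i : ℝ) = -(bas i) := abs_of_neg (lt_of_le_of_ne h hb)
    rw [this]; push_cast; ring

lemma coe_toNNRat (q : ℚ) : ((toNNRat q : ℚ≥0) : ℚ) = max q 0 := rfl

/-- the key `ℚ≥0` identity for splitting into positive and negative parts -/
lemma toNNRat_key (u v : ℚ) :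
    toNNRat (u + v) + (toNNRat (-u) + toNNRat (-v))
      = (toNNRat u + toNNRat v) + toNNRat (-(u + v)) := by
  have key : ∀ a : ℚ, ((toNNRat a : ℚ≥0) : ℚ) - ((toNNRat (-a) : ℚ≥0) : ℚ) = a := by
    intro a
    rw [coe_toNNRat, coe_toNNRat]
    rcases le_total a 0 with h | h
    · rw [max_eq_right h, max_eq_left (by linarith)]; ring
    · rw [max_eq_left h, max_eq_right (by linarith)]; ring
  have h1 := key (u + v); have h2 := key u; have h3 := key v
  apply NNRat.coe_injective
  push_cast
  linarith

noncomputable def Apart (x : ℝ) : M c :=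
  ((bas.repr) x).sum fun i q => mu (beta i) (toNNRat (eps i q))

noncomputable def Bpart (x : ℝ) : M c :=
  ((bas.repr) x).sum fun i q => mu (beta i) (toNNRat (-(eps i q)))

lemma Apart_sum_subset (x : ℝ) {S : Finset (Module.Basis.ofVectorSpaceIndex ℚ ℝ)}
    (hS : ((bas.repr) x).support ⊆ S) :
    Apart c x = ∑ i ∈ S, mu (beta i) (toNNRat (eps i ((bas.repr) x i))) :=
  Finsupp.sum_of_support_subset _ hS _ (by intro i _; rw [eps_zero]; exact mu_zero _)

lemma Bpart_sum_subset (x : ℝ) {S : Finset (Module.Basis.ofVectorSpaceIndex ℚ ℝ)}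
    (hS : ((bas.repr) x).support ⊆ S) :
    Bpart c x = ∑ i ∈ S, mu (beta i) (toNNRat (-(eps i ((bas.repr) x i)))) :=
  Finsupp.sum_of_support_subset _ hS _
    (by intro i _; rw [eps_zero]; show (mu _ (toNNRat (-0 : ℚ)) : M c) = 0
        rw [neg_zero]; exact mu_zero _)

lemma AB_key (x y : ℝ) :
    Apart c (x + y) + (Bpart c x + Bpart c y) = (Apart c x + Apart c y) + Bpart c (x + y) := by
  classical
  set rx := (bas.repr) x with hrx
  set ry := (bas.repr) y with hry
  have hxy : (bas.repr) (x + y) = rx + ry := by rw [map_add]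
  set S : Finset (Module.Basis.ofVectorSpaceIndex ℚ ℝ) := rx.support ∪ ry.support with hS
  have hsx : rx.support ⊆ S := Finset.subset_union_left
  have hsy : ry.support ⊆ S := Finset.subset_union_right
  have hsxy : ((bas.repr) (x + y)).support ⊆ S := by
    rw [hxy]; exact Finsupp.support_add.trans (by rw [hS])
  rw [Apart_sum_subset c x hsx, Apart_sum_subset c y hsy, Apart_sum_subset c (x+y) hsxy,
      Bpart_sum_subset c x hsx, Bpart_sum_subset c y hsy, Bpart_sum_subset c (x+y) hsxy]
  rw [← Finset.sum_add_distrib, ← Finset.sum_add_distrib, ← Finset.sum_add_distrib,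
      ← Finset.sum_add_distrib]
  apply Finset.sum_congr rfl
  intro i _
  rw [hxy]
  have happ : (rx + ry) i = rx i + ry i := Finsupp.add_apply _ _ _
  rw [happ, eps_add]
  set u := eps i (rx i)
  set v := eps i (ry i)
  rw [← mu_add, ← mu_add, ← mu_add, ← mu_add, toNNRat_key]

lemma nnratCast_real (q : ℚ≥0) : ((q : ℝ≥0) : ℝ) = ((q : ℚ) : ℝ) := by
  rw [NNRat.cast_def]
  push_cast
  conv_rhs => rw [← NNRat.num_div_den q]
  push_cast
  ring

lemma toNNRat_real (a : ℚ) : ((toNNRat a : ℝ≥0) : ℝ) = max (a : ℝ) 0 := by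
  rw [nnratCast_real, coe_toNNRat]
  rcases le_total a 0 with h | h
  · rw [max_eq_right h, max_eq_right (by exact_mod_cast h)]; norm_num
  · rw [max_eq_left h, max_eq_left (by exact_mod_cast h)]

noncomputable def xHom : M c →+ ℝ≥0 where
  toFun := M.x
  map_zero' := rfl
  map_add' _ _ := rfl

lemma AB_x (x : ℝ) : ((Apart c x).x : ℝ) = ((Bpart c x).x : ℝ) + x := by
  classical
  have hAx : (Apart c x).x
      = ∑ i ∈ ((bas.repr) x).support, (mu (beta i) (toNNRat (eps i ((bas.repr) x i))) : M c).x := by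
    rw [Apart_sum_subset c x subset_rfl]
    exact map_sum (xHom c) _ _
  have hBx : (Bpart c x).x
      = ∑ i ∈ ((bas.repr) x).support, (mu (beta i) (toNNRat (-(eps i ((bas.repr) x i)))) : M c).x := by
    rw [Bpart_sum_subset c x subset_rfl]
    exact map_sum (xHom c) _ _
  have hxsum : x = ∑ i ∈ ((bas.repr) x).support, ((bas.repr x i : ℚ) : ℝ) * bas i := by
    conv_lhs => rw [← bas.linearCombination_repr x]
    rw [Finsupp.linearCombination_apply, Finsupp.sum]
    apply Finset.sum_congr rfl
    intros i _
    rw [Rat.smul_def]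
  rw [hAx, hBx, NNReal.coe_sum, NNReal.coe_sum]
  calc ∑ i ∈ ((bas.repr) x).support, ((mu (beta i) (toNNRat (eps i ((bas.repr) x i))) : M c).x : ℝ)
      = ∑ i ∈ ((bas.repr) x).support,
          (((mu (beta i) (toNNRat (-(eps i ((bas.repr) x i)))) : M c).x : ℝ)
            + ((bas.repr x i : ℚ) : ℝ) * bas i) := ?_
    _ = (∑ i ∈ ((bas.repr) x).support, ((mu (beta i) (toNNRat (-(eps i ((bas.repr) x i)))) : M c).x : ℝ))
          + ∑ i ∈ ((bas.repr) x).support, ((bas.repr x i : ℚ) : ℝ) * bas i :=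
        Finset.sum_add_distrib
    _ = _ + x := by rw [← hxsum]
  apply Finset.sum_congr rfl
  intro i _
  set q := (bas.repr) x i
  rw [mu_x, mu_x, NNReal.coe_mul, NNReal.coe_mul, toNNRat_real, toNNRat_real,
      ← eps_beta i q]
  set t := ((eps i q : ℚ) : ℝ)
  have hc : ((-(eps i q) : ℚ) : ℝ) = -t := by push_cast; ring
  rw [hc]
  rcases le_total t 0 with h | h
  · rw [max_eq_right h, max_eq_left (by linarith)]; ring
  · rw [max_eq_left h, max_eq_right (by linarith)]; ring

lemma B_le_A {x : ℝ} (hx : 0 ≤ x) : (Bpart c x).x ≤ (Apart c x).x := by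
  rw [← NNReal.coe_le_coe, AB_x]
  linarith

noncomputable def sec (x : ℝ) : M c := msub (Apart c x) (Bpart c x)

lemma sec_x {x : ℝ} (hx : 0 ≤ x) : ((sec c x).x : ℝ) = x := by
  show (((Apart c x).x - (Bpart c x).x : ℝ≥0) : ℝ) = x
  rw [NNReal.coe_sub (B_le_A c hx), AB_x]
  ring

lemma sec_add {x y : ℝ} (hx : 0 ≤ x) (hy : 0 ≤ y) :
    sec c (x + y) = sec c x + sec c y := by
  have hxy : 0 ≤ x + y := by linarith
  unfold sec
  rw [msub_add_msub (B_le_A c hx) (B_le_A c hy)]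
  apply msub_unique
  · exact B_le_A c hxy
  · rw [add_x, add_x]
    exact add_le_add (B_le_A c hx) (B_le_A c hy)
  · exact AB_key c x y

lemma sec_zero : sec c 0 = 0 := by
  have h := sec_add c (le_refl (0:ℝ)) (le_refl (0:ℝ))
  rw [add_zero] at h
  apply add_right_cancel' _ _ (sec c 0)
  rw [← h, zero_add]

theorem exists_pot : ∃ g : ℝ≥0 → ℝ, g 0 = 0 ∧
    ∀ x y : ℝ≥0, c.f x y = g x + g y - g (x + y) := by
  refine ⟨fun t => -(sec c (t : ℝ)).u, ?_, ?_⟩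
  · show -(sec c ((0:ℝ≥0) : ℝ)).u = 0
    rw [NNReal.coe_zero, sec_zero]
    show -(0:ℝ) = 0
    ring
  · intro x y
    have h := sec_add c x.coe_nonneg y.coe_nonneg
    have hu : (sec c ((x:ℝ) + y)).u
        = (sec c x).u + (sec c y).u + c.f (sec c (x:ℝ)).x (sec c (y:ℝ)).x := by
      rw [h]; rfl
    have hx : (sec c (x:ℝ)).x = x := by
      apply NNReal.coe_injective
      exact sec_x c x.coe_nonneg
    have hy : (sec c (y:ℝ)).x = y := by
      apply NNReal.coe_injective
      exact sec_x c y.coe_nonneg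
    have hcoe : ((x + y : ℝ≥0) : ℝ) = (x : ℝ) + y := by push_cast; ring
    rw [hx, hy] at hu
    show c.f x y = -(sec c ((x:ℝ≥0):ℝ)).u + -(sec c ((y:ℝ≥0):ℝ)).u - -(sec c ((x+y:ℝ≥0):ℝ)).u
    rw [hcoe]
    rw [hu]
    ring

end Construction

section Main

variable (Hhat : List ℝ → ℝ)
variable (h_symm : ∀ L M : List ℝ, L.Perm M → (∀ x ∈ L, 0 ≤ x) → 0 < L.sum → Hhat L = Hhat M)
variable (hc : ∀ P : List (List ℝ), (∀ B ∈ P, (∀ x ∈ B, 0 ≤ x) ∧ 0 < B.sum) →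
    Hhat P.flatten = Hhat (P.map List.sum) + (P.map Hhat).sum)

include h_symm hc

theorem potential_of_cocycle :
    ∃ g : ℝ → ℝ, g 1 = 0 ∧
      ∀ L : List ℝ, L ≠ [] → (∀ x ∈ L, 0 ≤ x) → 0 < L.sum →
        Hhat L = (L.map g).sum - g L.sum := by
  -- singletons vanish
  have hH1 : ∀ a : ℝ, 0 < a → Hhat [a] = 0 := by
    intro a ha
    have h := hc [[a]] (by
      intro B hB
      simp only [List.mem_singleton] at hB
      subst hB
      refine ⟨?_, by simpa using ha⟩
      intro x hx
      simp only [List.mem_singleton] at hx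
      subst hx; linarith)
    simp only [List.flatten, List.append_eq, List.map, List.sum_cons, List.sum_nil, List.append_nil,
      add_zero] at h
    linarith
  -- the pair cocycle identity
  have hpair : ∀ a b d : ℝ, 0 < a → 0 < b → 0 < d →
      Hhat [a, b + d] + Hhat [b, d] = Hhat [a + b, d] + Hhat [a, b] := by
    intro a b d ha hb hd
    have h1 := hc [[a], [b, d]] (by
      intro B hB
      simp only [List.mem_cons, List.mem_singleton, List.not_mem_nil, or_false] at hB
      rcases hB with hB | hB <;> subst hB <;> constructor
      · intro x hx; simp only [List.mem_singleton] at hx; subst hx; linarith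
      · simpa using ha
      · intro x hx; simp only [List.mem_cons, List.mem_singleton, List.not_mem_nil, or_false] at hx
        rcases hx with hx | hx <;> subst hx <;> linarith
      · simp only [List.sum_cons, List.sum_nil, add_zero]; linarith)
    have h2 := hc [[a, b], [d]] (by
      intro B hB
      simp only [List.mem_cons, List.mem_singleton, List.not_mem_nil, or_false] at hB
      rcases hB with hB | hB <;> subst hB <;> constructor
      · intro x hx; simp only [List.mem_cons, List.mem_singleton, List.not_mem_nil, or_false] at hx
        rcases hx with hx | hx <;> subst hx <;> linarith
      · simp only [List.sum_cons, List.sum_nil, add_zero]; linarith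
      · intro x hx; simp only [List.mem_singleton] at hx; subst hx; linarith
      · simpa using hd)
    simp only [List.flatten, List.append_eq, List.map, List.sum_cons, List.sum_nil, List.append_nil,
      add_zero, List.cons_append, List.nil_append] at h1 h2
    rw [hH1 a ha, hH1 d hd] at *
    linarith
  -- build the cocycle structure
  set f : ℝ≥0 → ℝ≥0 → ℝ := fun x y => if 0 < x ∧ 0 < y then Hhat [x, y] else 0 with hf
  have f_pos : ∀ x y : ℝ≥0, 0 < x → 0 < y → f x y = Hhat [x, y] := by
    intro x y hx hy
    simp only [hf]
    exact if_pos ⟨hx, hy⟩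
  have f_zl : ∀ y : ℝ≥0, f 0 y = 0 := by
    intro y; simp only [hf]
    exact if_neg (by rintro ⟨h, -⟩; exact lt_irrefl 0 h)
  have f_zr : ∀ y : ℝ≥0, f y 0 = 0 := by
    intro y; simp only [hf]
    exact if_neg (by rintro ⟨-, h⟩; exact lt_irrefl 0 h)
  have fsymm : ∀ x y : ℝ≥0, f x y = f y x := by
    intro x y
    rcases eq_zero_or_pos x with hx | hx
    · subst hx; rw [f_zl, f_zr]
    rcases eq_zero_or_pos y with hy | hy
    · subst hy; rw [f_zl, f_zr]
    rw [f_pos x y hx hy, f_pos y x hy hx]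
    apply h_symm
    · exact List.Perm.swap _ _ _
    · intro t ht
      simp only [List.mem_cons, List.mem_singleton, List.not_mem_nil, or_false] at ht
      rcases ht with ht | ht <;> subst ht <;> positivity
    · simp only [List.sum_cons, List.sum_nil, add_zero]
      have h1 : (0:ℝ) < y := hy
      have h2 : (0:ℝ) < x := hx
      linarith
  have fcoc : ∀ x y z : ℝ≥0, f x (y + z) + f y z = f (x + y) z + f x y := by
    intro x y z
    rcases eq_zero_or_pos x with hx | hx
    · subst hx
      rw [f_zl, f_zl, zero_add]
      ring
    rcases eq_zero_or_pos y with hy | hy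
    · subst hy
      simp only [f_zl, f_zr, zero_add, add_zero]
    rcases eq_zero_or_pos z with hz | hz
    · subst hz
      rw [f_zr, f_zr, add_zero, add_zero]
      ring
    · have hyz : 0 < y + z := by positivity
      have hxy : 0 < x + y := by positivity
      rw [f_pos _ _ hx hyz, f_pos _ _ hy hz, f_pos _ _ hxy hz, f_pos _ _ hx hy]
      push_cast
      exact hpair x y z hx hy hz
  have fzero : ∀ y : ℝ≥0, f 0 y = 0 := f_zl
  obtain ⟨g₀, hg₀0, hg₀⟩ := exists_pot ⟨f, fsymm, fcoc, fzero⟩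
  set g : ℝ → ℝ := fun t =>
    if ht : 0 < t then g₀ ⟨t, le_of_lt ht⟩ - t * g₀ 1 else if t = 0 then Hhat [0, 1] else 0
    with hgdef
  have hg_pos : ∀ (t : ℝ) (ht : 0 < t), g t = g₀ ⟨t, le_of_lt ht⟩ - t * g₀ 1 := by
    intro t ht
    simp only [hgdef]
    rw [dif_pos ht]
  have hg_zero : g 0 = Hhat [0, 1] := by
    simp only [hgdef]
    rw [dif_neg (lt_irrefl 0)]
    simp
  have hg_one : g 1 = 0 := by
    rw [hg_pos 1 one_pos]
    have h1 : (⟨(1:ℝ), le_of_lt one_pos⟩ : ℝ≥0) = 1 := rfl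
    rw [h1, one_mul]
    exact sub_self _
  have gpair : ∀ a b : ℝ, 0 < a → 0 < b → Hhat [a, b] = g a + g b - g (a + b) := by
    intro a b ha hb
    have hab : 0 < a + b := by linarith
    have hfab := hg₀ ⟨a, ha.le⟩ ⟨b, hb.le⟩
    rw [show (⟨f, fsymm, fcoc, fzero⟩ : Coc).f = f from rfl] at hfab
    rw [f_pos ⟨a, ha.le⟩ ⟨b, hb.le⟩ (NNReal.coe_pos.mp ha) (NNReal.coe_pos.mp hb)] at hfab
    have hsum : (⟨a, ha.le⟩ + ⟨b, hb.le⟩ : ℝ≥0) = ⟨a + b, hab.le⟩ := rfl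
    rw [hsum] at hfab
    have hfab' : Hhat [a, b]
        = g₀ ⟨a, le_of_lt ha⟩ + g₀ ⟨b, le_of_lt hb⟩ - g₀ ⟨a + b, le_of_lt hab⟩ := hfab
    rw [hg_pos a ha, hg_pos b hb, hg_pos _ hab]
    rw [hfab']
    ring
  -- `Hhat [0, x]` does not depend on `x > 0`
  have hzp : ∀ x : ℝ, 0 < x → Hhat [0, x] = Hhat [0, 1] := by
    intro x hx
    have h1 := hc [[0, x], [1]] (by
      intro B hB
      simp only [List.mem_cons, List.mem_singleton, List.not_mem_nil, or_false] at hB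
      rcases hB with hB | hB <;> subst hB <;> refine ⟨?_, ?_⟩
      · intro t ht
        simp only [List.mem_cons, List.mem_singleton, List.not_mem_nil, or_false] at ht
        rcases ht with ht | ht <;> subst ht <;> linarith
      · simp only [List.sum_cons, List.sum_nil]; linarith
      · intro t ht
        simp only [List.mem_singleton] at ht; subst ht; linarith
      · simp only [List.sum_cons, List.sum_nil]; linarith)
    have h2 := hc [[0, 1], [x]] (by
      intro B hB
      simp only [List.mem_cons, List.mem_singleton, List.not_mem_nil, or_false] at hB
      rcases hB with hB | hB <;> subst hB <;> refine ⟨?_, ?_⟩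
      · intro t ht
        simp only [List.mem_cons, List.mem_singleton, List.not_mem_nil, or_false] at ht
        rcases ht with ht | ht <;> subst ht <;> linarith
      · simp only [List.sum_cons, List.sum_nil]; linarith
      · intro t ht
        simp only [List.mem_singleton] at ht; subst ht; linarith
      · simp only [List.sum_cons, List.sum_nil]; linarith)
    simp only [List.flatten, List.append_eq, List.map, List.sum_cons, List.sum_nil, List.append_nil,
      List.cons_append, List.nil_append, add_zero, zero_add] at h1 h2
    have hp1 : ([0, x, 1] : List ℝ).Perm [0, 1, x] := (List.Perm.swap 1 x []).cons 0
    have hp2 : ([x, 1] : List ℝ).Perm [1, x] := List.Perm.swap 1 x []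
    have hs1 := h_symm _ _ hp1 (by
      intro t ht
      simp only [List.mem_cons, List.mem_singleton, List.not_mem_nil, or_false] at ht
      rcases ht with ht | ht | ht <;> subst ht <;> linarith)
      (by simp only [List.sum_cons, List.sum_nil]; linarith)
    have hs2 := h_symm _ _ hp2 (by
      intro t ht
      simp only [List.mem_cons, List.mem_singleton, List.not_mem_nil, or_false] at ht
      rcases ht with ht | ht <;> subst ht <;> linarith)
      (by simp only [List.sum_cons, List.sum_nil]; linarith)
    rw [hH1 1 one_pos] at h1
    rw [hH1 x hx] at h2
    linarith
  -- splitting off a positive head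
  have hstep_pos : ∀ (t : ℝ) (Ml : List ℝ), 0 < t → (∀ m ∈ Ml, 0 ≤ m) → 0 < Ml.sum →
      Hhat (t :: Ml) = Hhat [t, Ml.sum] + Hhat Ml := by
    intro t Ml ht hMl hMs
    have h := hc [[t], Ml] (by
      intro B hB
      simp only [List.mem_cons, List.mem_singleton, List.not_mem_nil, or_false] at hB
      rcases hB with hB | hB <;> subst hB <;> refine ⟨?_, ?_⟩
      · intro u hu; simp only [List.mem_singleton] at hu; subst hu; linarith
      · simp only [List.sum_cons, List.sum_nil]; linarith
      · exact hMl
      · exact hMs)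
    simp only [List.flatten, List.append_eq, List.map, List.sum_cons, List.sum_nil, List.append_nil,
      List.cons_append, List.nil_append, add_zero] at h
    rw [hH1 t ht] at h
    linarith
  -- splitting off a zero head
  have hstep_zero : ∀ Ml : List ℝ, Ml ≠ [] → (∀ m ∈ Ml, 0 ≤ m) → 0 < Ml.sum →
      Hhat (0 :: Ml) = Hhat [0, 1] + Hhat Ml := by
    intro Ml hne hMl hMs
    have h1 := hc [Ml, [0, 1]] (by
      intro B hB
      simp only [List.mem_cons, List.mem_singleton, List.not_mem_nil, or_false] at hB
      rcases hB with hB | hB <;> subst hB <;> refine ⟨?_, ?_⟩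
      · exact hMl
      · exact hMs
      · intro u hu
        simp only [List.mem_cons, List.mem_singleton, List.not_mem_nil, or_false] at hu
        rcases hu with hu | hu <;> subst hu <;> linarith
      · simp only [List.sum_cons, List.sum_nil]; linarith)
    have h2 := hc [0 :: Ml, [1]] (by
      intro B hB
      simp only [List.mem_cons, List.mem_singleton, List.not_mem_nil, or_false] at hB
      rcases hB with hB | hB <;> subst hB <;> refine ⟨?_, ?_⟩
      · intro u hu
        simp only [List.mem_cons] at hu
        rcases hu with hu | hu
        · subst hu; linarith
        · exact hMl u hu
      · simp only [List.sum_cons, zero_add]; exact hMs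
      · intro u hu; simp only [List.mem_singleton] at hu; subst hu; linarith
      · simp only [List.sum_cons, List.sum_nil]; linarith)
    simp only [List.flatten, List.append_eq, List.map, List.sum_cons, List.sum_nil, List.append_nil,
      List.cons_append, List.nil_append, add_zero, zero_add] at h1 h2
    have hperm : (Ml ++ [0, 1]).Perm (0 :: (Ml ++ [1])) := by
      have p1 : (Ml ++ [0, 1]).Perm ([0, 1] ++ Ml) := List.perm_append_comm
      have p2 : (Ml ++ [1]).Perm ([1] ++ Ml) := List.perm_append_comm
      have p3 : (0 :: (Ml ++ [1])).Perm (0 :: ([1] ++ Ml)) := p2.cons 0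
      exact p1.trans p3.symm
    have hs := h_symm _ _ hperm (by
      intro u hu
      rcases List.mem_append.mp hu with hu | hu
      · exact hMl u hu
      · simp only [List.mem_cons, List.mem_singleton, List.not_mem_nil, or_false] at hu
        rcases hu with hu | hu <;> subst hu <;> linarith)
      (by rw [List.sum_append]; simp only [List.sum_cons, List.sum_nil]; linarith)
    rw [hH1 1 one_pos] at h2
    have hMsum : (0 :: Ml).sum = Ml.sum := by simp
    -- h1 : Hhat (Ml ++ [0, 1]) = Hhat [Ml.sum, 1] + (Hhat Ml + Hhat [0, 1])
    -- h2 : Hhat (0 :: (Ml ++ [1])) = Hhat [Ml.sum, 1] + Hhat (0 :: Ml)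
    linarith
  -- positive sums
  have possum : ∀ Ml : List ℝ, Ml ≠ [] → (∀ m ∈ Ml, 0 < m) → 0 < Ml.sum := by
    intro Ml hne hpos
    cases Ml with
    | nil => exact absurd rfl hne
    | cons a t =>
      simp only [List.sum_cons]
      have h1 : 0 ≤ t.sum := List.sum_nonneg fun x hx => (hpos x (List.mem_cons_of_mem _ hx)).le
      have h2 := hpos a (List.mem_cons_self)
      linarith
  -- main induction
  have main : ∀ (n : ℕ) (L : List ℝ), L.length ≤ n → L ≠ [] → (∀ x ∈ L, 0 ≤ x) → 0 < L.sum →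
      Hhat L = (L.map g).sum - g L.sum := by
    intro n
    induction n with
    | zero =>
      intro L h hne _ _
      exact absurd (List.length_eq_zero_iff.mp (Nat.le_zero.mp h)) hne
    | succ n ih =>
      intro L hlen hne hnn hsum
      by_cases hz : (0 : ℝ) ∈ L
      · set R := L.erase 0 with hR
        have hperm : L.Perm (0 :: R) := List.perm_cons_erase hz
        have hsum' : L.sum = R.sum := by
          rw [hperm.sum_eq, List.sum_cons, zero_add]
        have hRsum : 0 < R.sum := hsum' ▸ hsum
        have hRne : R ≠ [] := by
          intro h
          rw [h, List.sum_nil] at hRsum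
          exact lt_irrefl _ hRsum
        have hRnn : ∀ x ∈ R, 0 ≤ x := fun x hx => hnn x (List.mem_of_mem_erase hx)
        have hRlen : R.length ≤ n := by
          have hL := List.length_erase_of_mem hz
          have hpos : 1 ≤ L.length := by
            cases L with
            | nil => exact absurd rfl hne
            | cons _ _ => simp
          rw [hR, hL]
          omega
        have h1 : Hhat L = Hhat (0 :: R) := h_symm _ _ hperm hnn hsum
        have h2 : Hhat (0 :: R) = Hhat [0, 1] + Hhat R := hstep_zero R hRne hRnn hRsum
        have h3 := ih R hRlen hRne hRnn hRsum
        have hmap : (L.map g).sum = g 0 + (R.map g).sum := by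
          rw [(hperm.map g).sum_eq, List.map_cons, List.sum_cons]
        rw [h1, h2, h3, hmap, hsum', hg_zero]
        ring
      · cases L with
        | nil => exact absurd rfl hne
        | cons a Ml =>
          have hpos : ∀ x ∈ (a :: Ml), 0 < x := by
            intro x hx
            rcases (hnn x hx).lt_or_eq with h | h
            · exact h
            · rw [← h] at hx
              exact absurd hx hz
          have ha : 0 < a := hpos a (List.mem_cons_self)
          cases Ml with
          | nil =>
            simp only [List.map_cons, List.map_nil, List.sum_cons, List.sum_nil, add_zero]
            rw [hH1 a ha]
            ring
          | cons b T =>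
            have hMlne : (b :: T) ≠ [] := by simp
            have hMlpos : ∀ x ∈ (b :: T), 0 < x :=
              fun x hx => hpos x (List.mem_cons_of_mem _ hx)
            have hMlnn : ∀ x ∈ (b :: T), 0 ≤ x := fun x hx => (hMlpos x hx).le
            have hMs : 0 < (b :: T).sum := possum _ hMlne hMlpos
            have h1 : Hhat (a :: b :: T) = Hhat [a, (b :: T).sum] + Hhat (b :: T) :=
              hstep_pos a _ ha hMlnn hMs
            have hlen' : (b :: T).length ≤ n := by
              simp only [List.length_cons] at hlen ⊢
              omega
            have h2 := ih (b :: T) hlen' hMlne hMlnn hMs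
            have h3 := gpair a (b :: T).sum ha hMs
            rw [h1, h3, h2]
            simp only [List.map_cons, List.sum_cons]
            ring
  refine ⟨g, hg_one, ?_⟩
  intro L hne hnn hsum
  exact main L.length L le_rfl hne hnn hsum

end Main

lemma sum_map_sub {α : Type*} (l : List α) (f h : α → ℝ) :
    (l.map fun a => f a - h a).sum = (l.map f).sum - (l.map h).sum := by
  induction l with
  | nil => simp
  | cons a t ih =>
    simp only [List.map_cons, List.sum_cons, ih]
    ring

theorem cocycle_of_potential (Hhat : List ℝ → ℝ) (g : ℝ → ℝ)
    (hg : ∀ L : List ℝ, L ≠ [] → (∀ x ∈ L, 0 ≤ x) → 0 < L.sum →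
      Hhat L = (L.map g).sum - g L.sum) :
    ∀ P : List (List ℝ), (∀ B ∈ P, (∀ x ∈ B, 0 ≤ x) ∧ 0 < B.sum) →
      Hhat P.flatten = Hhat (P.map List.sum) + (P.map Hhat).sum := by
  intro P hP
  rcases eq_or_ne P [] with hPnil | hPne
  · subst hPnil
    simp
  · have hBne : ∀ B ∈ P, B ≠ [] := by
      intro B hB h
      have h2 := (hP B hB).2
      rw [h, List.sum_nil] at h2
      exact lt_irrefl _ h2
    have hflat_nonneg : ∀ x ∈ P.flatten, 0 ≤ x := by
      intro x hx
      obtain ⟨B, hB, hxB⟩ := List.mem_flatten.mp hx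
      exact (hP B hB).1 x hxB
    have hsum_eq : P.flatten.sum = (P.map List.sum).sum := List.sum_flatten
    have hmaps_nonneg : ∀ x ∈ P.map List.sum, 0 ≤ x := by
      intro x hx
      obtain ⟨B, hB, rfl⟩ := List.mem_map.mp hx
      exact ((hP B hB).2).le
    have hmaps_pos : 0 < (P.map List.sum).sum := by
      cases P with
      | nil => exact absurd rfl hPne
      | cons B Q =>
        simp only [List.map_cons, List.sum_cons]
        have h1 : 0 < B.sum := (hP B (List.mem_cons_self)).2
        have h2 : 0 ≤ (Q.map List.sum).sum :=
          List.sum_nonneg (by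
            intro x hx
            obtain ⟨B', hB', rfl⟩ := List.mem_map.mp hx
            exact ((hP B' (List.mem_cons_of_mem _ hB')).2).le)
        linarith
    have hflat_pos : 0 < P.flatten.sum := by rw [hsum_eq]; exact hmaps_pos
    have hflat_ne : P.flatten ≠ [] := by
      intro h
      rw [h, List.sum_nil] at hflat_pos
      exact lt_irrefl _ hflat_pos
    have hmaps_ne : P.map List.sum ≠ [] := by
      cases P with
      | nil => exact absurd rfl hPne
      | cons B Q => simp
    have e1 := hg P.flatten hflat_ne hflat_nonneg hflat_pos
    have e2 := hg (P.map List.sum) hmaps_ne hmaps_nonneg hmaps_pos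
    have e3 : (P.map Hhat).sum
        = (P.map fun B => (B.map g).sum).sum - (P.map fun B => g B.sum).sum := by
      rw [← sum_map_sub]
      congr 1
      apply List.map_congr_left
      intro B hB
      exact hg B (hBne B hB) ((hP B hB).1) ((hP B hB).2)
    have e4 : (P.flatten.map g).sum = (P.map fun B => (B.map g).sum).sum := by
      rw [List.map_flatten, List.sum_flatten, List.map_map]
      rfl
    have e5 : (P.map List.sum).map g = P.map fun B => g B.sum := by
      rw [List.map_map]
      rfl
    rw [e1, e2, e3, e4, e5, hsum_eq]
    ring

end CocyclePot

/-- A symmetric real-valued function `Ĥ` on finite sequences (lists) of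
nonnegative reals with positive sum satisfies the 2-cocycle equation if and
only if there is a `potential` `g : [0,∞) → ℝ` with
`Ĥ (a₁,…,aₙ) = g a₁ + … + g aₙ - g (a₁+…+aₙ)`; moreover `g` can be chosen so
that `g 1 = 0`. -/
theorem cocycle_iff_potential (Hhat : List ℝ → ℝ)
    (h_symm : ∀ L M : List ℝ, L.Perm M → (∀ x ∈ L, 0 ≤ x) → 0 < L.sum →
      Hhat L = Hhat M) :
    (∀ P : List (List ℝ), (∀ B ∈ P, (∀ x ∈ B, 0 ≤ x) ∧ 0 < B.sum) →
        Hhat P.flatten = Hhat (P.map List.sum) + (P.map Hhat).sum) ↔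
    (∃ g : ℝ → ℝ, g 1 = 0 ∧
      ∀ L : List ℝ, L ≠ [] → (∀ x ∈ L, 0 ≤ x) → 0 < L.sum →
        Hhat L = (L.map g).sum - g L.sum) := by
  constructor
  · intro hc
    exact CocyclePot.potential_of_cocycle Hhat h_symm hc
  · rintro ⟨g, -, hg⟩
    exact CocyclePot.cocycle_of_potential Hhat g hg
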